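/- arXiv:1909.12751 — 2 statements merged into one kernel-verified Lean document; each statement's English description precedes it below -/
import Mathlib

section
/- Let f : S → ℍ be smooth. Then f is a CRF function if and only if f_{(q̄₁)} ≡ 0 and f_{(q̄₂)} ≡ 0 on S. -/
/-!
Quaternionic analysis in two variables: the Cauchy–Riemann–Fueter operator,
CRF functions and admissible functions on a hypersurface `S ⊂ ℍ²`.
-/

noncomputable section

open Set

/-- The quaternions. -/
local notation "ℍ" => Quaternion ℝ

/-- `ℍ²`. -/
abbrev E : Type := ℍ × ℍ

/-- The real basis `1, i, j, k` of `ℍ`. -/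
def e : Fin 4 → ℍ := ![1, ⟨0,1,0,0⟩, ⟨0,0,1,0⟩, ⟨0,0,0,1⟩]

/-- The coordinate directions of the first quaternionic variable. -/
def e1 (α : Fin 4) : E := (e α, 0)

/-- The coordinate directions of the second quaternionic variable. -/
def e2 (α : Fin 4) : E := (0, e α)

/-- The Euclidean scalar product of `ℍ ≅ ℝ⁴`. -/
def qdot (p q : ℍ) : ℝ := (star p * q).re

/-- The Euclidean scalar product of `ℍ² ≅ ℝ⁸`. -/
def edot (p q : E) : ℝ := qdot p.1 q.1 + qdot p.2 q.2

/-- The quaternionic scalar product `⟨p,r⟩ = p̄₁r₁ + p̄₂r₂` on `ℍ²`. -/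
def qinner (p r : E) : ℍ := star p.1 * r.1 + star p.2 * r.2

/-- `∂F/∂q̄₁ = Σ_α i_α ∂F/∂x_α`. -/
def dbar1 (F : E → ℍ) : E → ℍ := fun p => ∑ α, e α * fderiv ℝ F p (e1 α)

/-- `∂F/∂q̄₂ = Σ_α i_α ∂F/∂y_α`. -/
def dbar2 (F : E → ℍ) : E → ℍ := fun p => ∑ α, e α * fderiv ℝ F p (e2 α)

/-- `∂F/∂q₁ = Σ_α ī_α ∂F/∂x_α`. -/
def d1 (F : E → ℍ) : E → ℍ := fun p => ∑ α, star (e α) * fderiv ℝ F p (e1 α)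

/-- `∂F/∂q₂ = Σ_α ī_α ∂F/∂y_α`. -/
def d2 (F : E → ℍ) : E → ℍ := fun p => ∑ α, star (e α) * fderiv ℝ F p (e2 α)

/-- The Cauchy–Riemann–Fueter operator `𝔇̄F = (∂F/∂q̄₁, ∂F/∂q̄₂)`. -/
def Dbar (F : E → ℍ) : E → E := fun p => (dbar1 F p, dbar2 F p)

/-- `Δ₁`, the Laplacian in the variables `x₀,…,x₃`. -/
def lap1 (F : E → ℍ) : E → ℍ :=
  fun p => ∑ α, fderiv ℝ (fun x => fderiv ℝ F x (e1 α)) p (e1 α)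

/-- `Δ₂`, the Laplacian in the variables `y₀,…,y₃`. -/
def lap2 (F : E → ℍ) : E → ℍ :=
  fun p => ∑ α, fderiv ℝ (fun x => fderiv ℝ F x (e2 α)) p (e2 α)

/-- The Euclidean gradient `∇ρ` of a real valued function on `ℍ² ≅ ℝ⁸`. -/
def grad (ρ : E → ℝ) (p : E) : E :=
  (∑ α, fderiv ℝ ρ p (e1 α) • e α, ∑ α, fderiv ℝ ρ p (e2 α) • e α)

/-- The unit normal `ν = ∇ρ/|∇ρ|` of `S = {ρ = 0}`. -/
def nu (ρ : E → ℝ) (p : E) : E :=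
  (Real.sqrt (edot (grad ρ p) (grad ρ p)))⁻¹ • grad ρ p

/-- `F` is a smooth extension of `f : S → ℍ` to an open neighborhood of `S`. -/
def SmoothExt (S : Set E) (f F : E → ℍ) : Prop :=
  ∃ U : Set E, IsOpen U ∧ S ⊆ U ∧ ContDiffOn ℝ (⊤:ℕ∞) F U ∧ EqOn F f S

/-- `f : S → ℍ` is smooth (it admits a smooth extension near `S`). -/
def SmoothOnS (S : Set E) (f : E → ℍ) : Prop := ∃ F, SmoothExt S f F

/-- `f : S → ℍ` is a CRF function: some smooth extension `F` of `f`
satisfies `𝔇̄F = 0` at every point of `S`. -/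
def IsCRF (S : Set E) (f : E → ℍ) : Prop :=
  ∃ F, SmoothExt S f F ∧ ∀ p ∈ S, dbar1 F p = 0 ∧ dbar2 F p = 0

/-- The expression `∂F/∂ν − ⟨ν, 𝔇̄F⟩` defining `f^⊥` through the extension `F`. -/
def perpOf (ρ : E → ℝ) (F : E → ℍ) (p : E) : ℍ :=
  fderiv ℝ F p (nu ρ p) - qinner (nu ρ p) (Dbar F p)

/-- `f_{(x_α)} = τ_{x_α}(f) + (∂/∂x_α, ν) f^⊥`, computed through the extension `F`. -/
def fx (ρ : E → ℝ) (F : E → ℍ) (α : Fin 4) (p : E) : ℍ :=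
  fderiv ℝ F p (e1 α - edot (e1 α) (nu ρ p) • nu ρ p)
    + edot (e1 α) (nu ρ p) • perpOf ρ F p

/-- `f_{(y_α)} = τ_{y_α}(f) + (∂/∂y_α, ν) f^⊥`, computed through the extension `F`. -/
def fy (ρ : E → ℝ) (F : E → ℍ) (α : Fin 4) (p : E) : ℍ :=
  fderiv ℝ F p (e2 α - edot (e2 α) (nu ρ p) • nu ρ p)
    + edot (e2 α) (nu ρ p) • perpOf ρ F p

/-- `f_{(q̄₁)} = Σ_α i_α f_{(x_α)}`. -/
def fq1bar (ρ : E → ℝ) (F : E → ℍ) (p : E) : ℍ := ∑ α, e α * fx ρ F α p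

/-- `f_{(q̄₂)} = Σ_α i_α f_{(y_α)}`. -/
def fq2bar (ρ : E → ℝ) (F : E → ℍ) (p : E) : ℍ := ∑ α, e α * fy ρ F α p

/-- `f` is admissible: `f` is CRF and the eight functions
`f_{(x_α)}, f_{(y_α)}` (`α = 0,1,2,3`) are CRF. -/
def Admissible (ρ : E → ℝ) (S : Set E) (f : E → ℍ) : Prop :=
  IsCRF S f ∧ ∀ F, SmoothExt S f F →
    ∀ α : Fin 4, IsCRF S (fx ρ F α) ∧ IsCRF S (fy ρ F α)

/-- `∂F/∂ρ`, the derivative along the vector field `∇ρ/|∇ρ|²`. -/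
def drho (ρ : E → ℝ) (F : E → ℍ) : E → ℍ :=
  fun p => fderiv ℝ F p ((edot (grad ρ p) (grad ρ p))⁻¹ • grad ρ p)

/-- The iterated derivative `∂^k F/∂ρ^k`. -/
def drhoIter (ρ : E → ℝ) : ℕ → (E → ℍ) → (E → ℍ)
  | 0 => fun F => F
  | (k+1) => fun F => drho ρ (drhoIter ρ k F)

lemma sum_qdot_smul (q : ℍ) : (∑ α : Fin 4, qdot (e α) q • e α) = q := by
  have h0 : (e 0).re = 1 ∧ (e 0).imI = 0 ∧ (e 0).imJ = 0 ∧ (e 0).imK = 0 := ⟨rfl, rfl, rfl, rfl⟩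
  have h1 : (e 1).re = 0 ∧ (e 1).imI = 1 ∧ (e 1).imJ = 0 ∧ (e 1).imK = 0 := ⟨rfl, rfl, rfl, rfl⟩
  have h2 : (e 2).re = 0 ∧ (e 2).imI = 0 ∧ (e 2).imJ = 1 ∧ (e 2).imK = 0 := ⟨rfl, rfl, rfl, rfl⟩
  have h3 : (e 3).re = 0 ∧ (e 3).imI = 0 ∧ (e 3).imJ = 0 ∧ (e 3).imK = 1 := ⟨rfl, rfl, rfl, rfl⟩
  simp only [qdot, Fin.sum_univ_four]
  ext <;>
    simp [Quaternion.re_mul, Quaternion.re_smul, Quaternion.imI_smul, Quaternion.imJ_smul,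
      Quaternion.imK_smul, h0, h1, h2, h3]

lemma qdot_self (q : ℍ) : qdot q q = Quaternion.normSq q := by
  simp [qdot, Quaternion.star_mul_self]

lemma edot_self_pos {p : E} (hp : p ≠ 0) : 0 < edot p p := by
  have h1 : (0:ℝ) ≤ Quaternion.normSq p.1 := Quaternion.normSq_nonneg
  have h2 : (0:ℝ) ≤ Quaternion.normSq p.2 := Quaternion.normSq_nonneg
  have : p.1 ≠ 0 ∨ p.2 ≠ 0 := by
    by_contra h; push_neg at h; exact hp (Prod.ext h.1 h.2)
  rcases this with h | h
  · have := lt_of_le_of_ne Quaternion.normSq_nonneg (Ne.symm (Quaternion.normSq_ne_zero.2 h))  -- check name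
    simp only [edot, qdot_self]; linarith
  · have := lt_of_le_of_ne Quaternion.normSq_nonneg (Ne.symm (Quaternion.normSq_ne_zero.2 h))
    simp only [edot, qdot_self]; linarith

lemma edot_e1 (α : Fin 4) (w : E) : edot (e1 α) w = qdot (e α) w.1 := by
  simp [edot, e1, qdot, Quaternion.re_zero]

lemma edot_e2 (α : Fin 4) (w : E) : edot (e2 α) w = qdot (e α) w.2 := by
  simp [edot, e2, qdot, Quaternion.re_zero]

lemma fx_eq (ρ : E → ℝ) (F : E → ℍ) (α : Fin 4) (p : E) :
    fx ρ F α p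
      = fderiv ℝ F p (e1 α) - edot (e1 α) (nu ρ p) • qinner (nu ρ p) (Dbar F p) := by
  simp only [fx, perpOf, map_sub, map_smul, smul_sub]
  abel

lemma fy_eq (ρ : E → ℝ) (F : E → ℍ) (α : Fin 4) (p : E) :
    fy ρ F α p
      = fderiv ℝ F p (e2 α) - edot (e2 α) (nu ρ p) • qinner (nu ρ p) (Dbar F p) := by
  simp only [fy, perpOf, map_sub, map_smul, smul_sub]
  abel

lemma fq1bar_eq (ρ : E → ℝ) (F : E → ℍ) (p : E) :
    fq1bar ρ F p = dbar1 F p - (nu ρ p).1 * qinner (nu ρ p) (Dbar F p) := by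
  set Q := qinner (nu ρ p) (Dbar F p) with hQ
  have : ∑ α : Fin 4, edot (e1 α) (nu ρ p) • (e α * Q) = (nu ρ p).1 * Q := by
    have : (∑ α : Fin 4, edot (e1 α) (nu ρ p) • e α) = (nu ρ p).1 := by
      simp only [edot_e1]; exact sum_qdot_smul _
    rw [← this, Finset.sum_mul]
    simp [smul_mul_assoc]
  rw [← this]
  simp only [fq1bar, fx_eq, mul_sub, mul_smul_comm, Finset.sum_sub_distrib, dbar1]
  rfl

lemma fq2bar_eq (ρ : E → ℝ) (F : E → ℍ) (p : E) :
    fq2bar ρ F p = dbar2 F p - (nu ρ p).2 * qinner (nu ρ p) (Dbar F p) := by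
  set Q := qinner (nu ρ p) (Dbar F p) with hQ
  have : ∑ α : Fin 4, edot (e2 α) (nu ρ p) • (e α * Q) = (nu ρ p).2 * Q := by
    have : (∑ α : Fin 4, edot (e2 α) (nu ρ p) • e α) = (nu ρ p).2 := by
      simp only [edot_e2]; exact sum_qdot_smul _
    rw [← this, Finset.sum_mul]
    simp [smul_mul_assoc]
  rw [← this]
  simp only [fq2bar, fy_eq, mul_sub, mul_smul_comm, Finset.sum_sub_distrib, dbar2]
  rfl

lemma edot_nonneg (p : E) : 0 ≤ edot p p := by
  simp only [edot, qdot_self]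
  have h1 : (0:ℝ) ≤ Quaternion.normSq p.1 := Quaternion.normSq_nonneg
  have h2 : (0:ℝ) ≤ Quaternion.normSq p.2 := Quaternion.normSq_nonneg
  linarith

lemma qstar_smul (s : ℝ) (q : ℍ) : star (s • q) = s • star q := by
  ext <;> simp [Quaternion.re_smul]

lemma fqbar_vanish_of_normal (ρ : E → ℝ) (G : E → ℍ) (p : E) (hg : grad ρ p ≠ 0) (lam : ℍ)
    (hG : ∀ v, fderiv ℝ G p v = fderiv ℝ ρ p v • lam) :
    fq1bar ρ G p = 0 ∧ fq2bar ρ G p = 0 := by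
  set g := grad ρ p with hgdef
  have hpos : 0 < edot g g := edot_self_pos hg
  set s : ℝ := Real.sqrt (edot g g) with hsdef
  have hs : s * s = edot g g := Real.mul_self_sqrt hpos.le
  have hs0 : s ≠ 0 := by
    intro h; rw [h, mul_zero] at hs; exact hpos.ne hs
  have hd1 : dbar1 G p = g.1 * lam := by
    have hg1 : g.1 = ∑ α : Fin 4, fderiv ℝ ρ p (e1 α) • e α := rfl
    rw [hg1]
    simp [dbar1, hG, Finset.sum_mul, smul_mul_assoc, mul_smul_comm]
  have hd2 : dbar2 G p = g.2 * lam := by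
    have hg2 : g.2 = ∑ α : Fin 4, fderiv ℝ ρ p (e2 α) • e α := rfl
    rw [hg2]
    simp [dbar2, hG, Finset.sum_mul, smul_mul_assoc, mul_smul_comm]
  have hnu : nu ρ p = s⁻¹ • g := rfl
  have hq : qinner (nu ρ p) (Dbar G p) = (s⁻¹ * edot g g) • lam := by
    simp only [qinner, Dbar, hd1, hd2, hnu, Prod.smul_fst, Prod.smul_snd, qstar_smul,
      smul_mul_assoc]
    rw [← smul_add, ← mul_assoc, ← mul_assoc, Quaternion.star_mul_self,
      Quaternion.star_mul_self, ← add_mul, mul_smul]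
    congr 1
    simp only [edot, qdot_self]
    rw [← Quaternion.coe_mul_eq_smul]
    push_cast
    ring_nf
  have hone : s⁻¹ * edot g g * s⁻¹ = 1 := by
    rw [← hs]; field_simp
  constructor
  · rw [fq1bar_eq, hq, hd1, hnu]
    simp only [Prod.smul_fst, smul_mul_assoc, mul_smul_comm, smul_smul]
    rw [hone, one_smul, sub_self]
  · rw [fq2bar_eq, hq, hd2, hnu]
    simp only [Prod.smul_snd, smul_mul_assoc, mul_smul_comm, smul_smul]
    rw [hone, one_smul, sub_self]

open Topology Filter in
lemma fderiv_normal_of_vanish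
    {Ω : Set E} (hΩ : IsOpen Ω) {ρ : E → ℝ} (hρ : ContDiffOn ℝ (⊤:ℕ∞) ρ Ω)
    {G : E → ℍ} {W : Set E} (hW : IsOpen W) (hG : ContDiffOn ℝ (⊤:ℕ∞) G W)
    (hGS : ∀ x ∈ Ω, ρ x = 0 → G x = 0)
    {p : E} (hpΩ : p ∈ Ω) (hpW : p ∈ W) (hρp : ρ p = 0)
    (hdρ : fderiv ℝ ρ p ≠ 0) :
    ∃ lam : ℍ, ∀ v, fderiv ℝ G p v = fderiv ℝ ρ p v • lam := by
  set f' := fderiv ℝ ρ p with hf'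
  obtain ⟨u, hu⟩ : ∃ u, f' u ≠ 0 := by
    by_contra h
    push_neg at h
    exact hdρ (ContinuousLinearMap.ext h)
  have hst : HasStrictFDerivAt ρ f' p :=
    (hρ.contDiffAt (hΩ.mem_nhds hpΩ)).hasStrictFDerivAt (by simp)
  have hsurj : f'.range = ⊤ := by
    rw [eq_top_iff]
    rintro t -
    refine ⟨(t / f' u) • u, ?_⟩
    simp only [map_smul, smul_eq_mul]
    field_simp
    rfl
  set φ : LinearMap.ker (f' : E →ₗ[ℝ] ℝ) → E := fun z => hst.implicitFunction ρ f' hsurj (ρ p) z with hφ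
  have hφd : HasStrictFDerivAt (hst.implicitFunction ρ f' hsurj (ρ p))
      (LinearMap.ker (f' : E →ₗ[ℝ] ℝ)).subtypeL 0 := hst.to_implicitFunction hsurj
  have hφ0 : φ 0 = p := hst.implicitFunction_apply_image hsurj
  have hev1 : ∀ᶠ z : LinearMap.ker (f' : E →ₗ[ℝ] ℝ) in 𝓝 0, ρ (φ z) = ρ p := by
    have hmap := hst.map_implicitFunction_eq hsurj
    have tend : Filter.Tendsto (fun z : LinearMap.ker (f' : E →ₗ[ℝ] ℝ) => ((ρ p : ℝ), z)) (𝓝 0)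
        (𝓝 (ρ p, 0)) := Filter.Tendsto.prodMk_nhds tendsto_const_nhds Filter.tendsto_id
    exact tend.eventually hmap
  have hcont : ContinuousAt φ 0 := hφd.hasFDerivAt.continuousAt
  have hev2 : ∀ᶠ z : LinearMap.ker (f' : E →ₗ[ℝ] ℝ) in 𝓝 0, φ z ∈ Ω := by
    have : Ω ∈ 𝓝 (φ 0) := hΩ.mem_nhds (by rw [hφ0]; exact hpΩ)
    exact hcont this
  have hev : ∀ᶠ z : LinearMap.ker (f' : E →ₗ[ℝ] ℝ) in 𝓝 0, G (φ z) = 0 := by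
    filter_upwards [hev1, hev2] with z h1 h2
    exact hGS _ h2 (by rw [h1, hρp])
  have hGd : DifferentiableAt ℝ G p :=
    (hG.contDiffAt (hW.mem_nhds hpW)).differentiableAt (by simp)
  have hchain : HasFDerivAt (fun z => G (φ z))
      ((fderiv ℝ G p).comp (LinearMap.ker (f' : E →ₗ[ℝ] ℝ)).subtypeL) 0 := by
    have h2 : HasFDerivAt G (fderiv ℝ G p) (φ 0) := by rw [hφ0]; exact hGd.hasFDerivAt
    exact h2.comp 0 hφd.hasFDerivAt
  have hzero : HasFDerivAt (fun z => G (φ z)) (0 : LinearMap.ker (f' : E →ₗ[ℝ] ℝ) →L[ℝ] ℍ) 0 :=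
    (hasFDerivAt_const (0:ℍ) (0 : LinearMap.ker (f' : E →ₗ[ℝ] ℝ))).congr_of_eventuallyEq hev
  have huniq : (fderiv ℝ G p).comp (LinearMap.ker (f' : E →ₗ[ℝ] ℝ)).subtypeL
      = (0 : LinearMap.ker (f' : E →ₗ[ℝ] ℝ) →L[ℝ] ℍ) := hchain.unique hzero
  have hker : ∀ v, f' v = 0 → fderiv ℝ G p v = 0 := by
    intro v hv
    have := congrFun (congrArg DFunLike.coe huniq) ⟨v, hv⟩
    simpa using this
  refine ⟨(f' u)⁻¹ • fderiv ℝ G p u, fun v => ?_⟩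
  have hv : f' (v - (f' v / f' u) • u) = 0 := by
    simp only [map_sub, map_smul, smul_eq_mul]
    field_simp
    simp
  have h0 := hker _ hv
  rw [map_sub, map_smul, sub_eq_zero] at h0
  rw [h0, smul_smul, div_eq_mul_inv]

lemma fq1bar_add (ρ : E → ℝ) (F F₀ G : E → ℍ) (p : E)
    (hadd : ∀ v, fderiv ℝ F p v = fderiv ℝ F₀ p v + fderiv ℝ G p v) :
    fq1bar ρ F p = fq1bar ρ F₀ p + fq1bar ρ G p := by
  have hd1 : dbar1 F p = dbar1 F₀ p + dbar1 G p := by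
    simp [dbar1, hadd, mul_add, Finset.sum_add_distrib]
  have hd2 : dbar2 F p = dbar2 F₀ p + dbar2 G p := by
    simp [dbar2, hadd, mul_add, Finset.sum_add_distrib]
  rw [fq1bar_eq, fq1bar_eq, fq1bar_eq]
  simp only [Dbar, hd1, hd2, qinner, mul_add]
  abel

lemma fq2bar_add (ρ : E → ℝ) (F F₀ G : E → ℍ) (p : E)
    (hadd : ∀ v, fderiv ℝ F p v = fderiv ℝ F₀ p v + fderiv ℝ G p v) :
    fq2bar ρ F p = fq2bar ρ F₀ p + fq2bar ρ G p := by
  have hd1 : dbar1 F p = dbar1 F₀ p + dbar1 G p := by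
    simp [dbar1, hadd, mul_add, Finset.sum_add_distrib]
  have hd2 : dbar2 F p = dbar2 F₀ p + dbar2 G p := by
    simp [dbar2, hadd, mul_add, Finset.sum_add_distrib]
  rw [fq2bar_eq, fq2bar_eq, fq2bar_eq]
  simp only [Dbar, hd1, hd2, qinner, mul_add]
  abel

/-- `re` as a continuous linear map. -/
def reCLM : ℍ →L[ℝ] ℝ :=
  LinearMap.toContinuousLinearMap (show ℍ →ₗ[ℝ] ℝ from QuaternionAlgebra.reₗ _ _ _)

/-- `star` as a continuous linear map on `ℍ`. -/
def starCLM : ℍ →L[ℝ] ℍ :=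
  LinearMap.toContinuousLinearMap
    { toFun := star, map_add' := fun a b => star_add a b, map_smul' := qstar_smul }

lemma contDiffOn_fderiv_apply {M : Type*} [NormedAddCommGroup M] [NormedSpace ℝ M]
    {f : E → M} {s : Set E} (hs : IsOpen s) (hf : ContDiffOn ℝ (⊤:ℕ∞) f s) (v : E) :
    ContDiffOn ℝ (⊤:ℕ∞) (fun p => fderiv ℝ f p v) s :=
  (hf.fderiv_of_isOpen hs (by exact_mod_cast le_top)).clm_apply contDiffOn_const

lemma contDiffOn_grad {ρ : E → ℝ} {s : Set E} (hs : IsOpen s)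
    (hρ : ContDiffOn ℝ (⊤:ℕ∞) ρ s) : ContDiffOn ℝ (⊤:ℕ∞) (grad ρ) s := by
  apply ContDiffOn.prodMk <;>
  · apply ContDiffOn.sum
    intro i _
    exact (contDiffOn_fderiv_apply hs hρ _).smul contDiffOn_const

lemma contDiffOn_star_comp {f : E → ℍ} {s : Set E} (hf : ContDiffOn ℝ (⊤:ℕ∞) f s) :
    ContDiffOn ℝ (⊤:ℕ∞) (fun p => star (f p)) s :=
  starCLM.contDiff.comp_contDiffOn hf

lemma contDiffOn_qdot {f g : E → ℍ} {s : Set E} (hf : ContDiffOn ℝ (⊤:ℕ∞) f s)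
    (hg : ContDiffOn ℝ (⊤:ℕ∞) g s) :
    ContDiffOn ℝ (⊤:ℕ∞) (fun p => qdot (f p) (g p)) s :=
  reCLM.contDiff.comp_contDiffOn ((contDiffOn_star_comp hf).mul hg)

lemma contDiffOn_edot {f g : E → E} {s : Set E} (hf : ContDiffOn ℝ (⊤:ℕ∞) f s)
    (hg : ContDiffOn ℝ (⊤:ℕ∞) g s) :
    ContDiffOn ℝ (⊤:ℕ∞) (fun p => edot (f p) (g p)) s :=
  (contDiffOn_qdot hf.fst hg.fst).add (contDiffOn_qdot hf.snd hg.snd)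

lemma contDiffOn_qinner {f g : E → E} {s : Set E} (hf : ContDiffOn ℝ (⊤:ℕ∞) f s)
    (hg : ContDiffOn ℝ (⊤:ℕ∞) g s) :
    ContDiffOn ℝ (⊤:ℕ∞) (fun p => qinner (f p) (g p)) s :=
  ((contDiffOn_star_comp hf.fst).mul hg.fst).add ((contDiffOn_star_comp hf.snd).mul hg.snd)

lemma contDiffOn_Dbar {F : E → ℍ} {s : Set E} (hs : IsOpen s)
    (hF : ContDiffOn ℝ (⊤:ℕ∞) F s) : ContDiffOn ℝ (⊤:ℕ∞) (Dbar F) s := by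
  apply ContDiffOn.prodMk <;>
  · apply ContDiffOn.sum
    intro i _
    exact contDiffOn_const.mul (contDiffOn_fderiv_apply hs hF _)

lemma nu_mul_qinner (ρ : E → ℝ) (p : E) (hg : grad ρ p ≠ 0) (r : E) :
    ((nu ρ p).1 * qinner (nu ρ p) r
        = (grad ρ p).1 * ((edot (grad ρ p) (grad ρ p))⁻¹ • qinner (grad ρ p) r))
    ∧ ((nu ρ p).2 * qinner (nu ρ p) r
        = (grad ρ p).2 * ((edot (grad ρ p) (grad ρ p))⁻¹ • qinner (grad ρ p) r)) := by
  set g := grad ρ p with hgdef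
  have hpos : 0 < edot g g := edot_self_pos hg
  set s : ℝ := Real.sqrt (edot g g) with hsdef
  have hs : s * s = edot g g := Real.mul_self_sqrt hpos.le
  have hnu : nu ρ p = s⁻¹ • g := rfl
  have hq : qinner (nu ρ p) r = s⁻¹ • qinner g r := by
    simp [qinner, hnu, qstar_smul, smul_mul_assoc, smul_add]
  have hinv : s⁻¹ * s⁻¹ = (edot g g)⁻¹ := by rw [← hs, mul_inv]
  constructor <;>
  · rw [hq, hnu]
    simp only [Prod.smul_fst, Prod.smul_snd, smul_mul_assoc, mul_smul_comm, smul_smul, hinv]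

/-- Theorem lu56, a ⟺ b. A smooth `f : S → ℍ` is a CRF
function if and only if `f_{(q̄₁)} ≡ f_{(q̄₂)} ≡ 0` on `S` (the latter computed
through any smooth extension of `f`, the value being independent of it). -/
theorem crf_iff_tangential_vanishing
    (Ω : Set E) (hΩ : IsOpen Ω)
    (ρ : E → ℝ) (hρ : ContDiffOn ℝ (⊤:ℕ∞) ρ Ω)
    (S : Set E) (hS : S = {p ∈ Ω | ρ p = 0})
    (hgrad : ∀ p ∈ S, grad ρ p ≠ 0)
    (f : E → ℍ) (hf : SmoothOnS S f) :
    IsCRF S f ↔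
      ∀ F, SmoothExt S f F → ∀ p ∈ S, fq1bar ρ F p = 0 ∧ fq2bar ρ F p = 0 := by
  constructor
  · rintro ⟨F₀, ⟨U₀, hU₀, hSU₀, hF₀CD, hF₀eq⟩, hD0⟩ F ⟨U, hU, hSU, hFCD, hFeq⟩ p hp
    have hpΩ : p ∈ Ω := by rw [hS] at hp; exact hp.1
    have hρp : ρ p = 0 := by rw [hS] at hp; exact hp.2
    have hgp := hgrad p hp
    have hdρ : fderiv ℝ ρ p ≠ 0 := by
      intro h
      apply hgp
      simp [grad, h]
    set G : E → ℍ := fun x => F x - F₀ x with hG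
    have hW : IsOpen (U ∩ U₀) := hU.inter hU₀
    have hpW : p ∈ U ∩ U₀ := ⟨hSU hp, hSU₀ hp⟩
    have hGCD : ContDiffOn ℝ (⊤:ℕ∞) G (U ∩ U₀) :=
      (hFCD.mono inter_subset_left).sub (hF₀CD.mono inter_subset_right)
    have hGS : ∀ x ∈ Ω, ρ x = 0 → G x = 0 := by
      intro x hxΩ hx
      have hxS : x ∈ S := by rw [hS]; exact ⟨hxΩ, hx⟩
      simp only [hG]
      rw [hFeq hxS, hF₀eq hxS, sub_self]
    obtain ⟨lam, hlam⟩ := fderiv_normal_of_vanish hΩ hρ hW hGCD hGS hpΩ hpW hρp hdρ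
    have hF₀d : DifferentiableAt ℝ F₀ p :=
      (hF₀CD.contDiffAt (hU₀.mem_nhds (hSU₀ hp))).differentiableAt (by simp)
    have hGd : DifferentiableAt ℝ G p :=
      (hGCD.contDiffAt (hW.mem_nhds hpW)).differentiableAt (by simp)
    have hadd : ∀ v, fderiv ℝ F p v = fderiv ℝ F₀ p v + fderiv ℝ G p v := by
      intro v
      have hFsplit : F = fun x => F₀ x + G x := by funext x; simp [hG]
      rw [hFsplit, fderiv_fun_add hF₀d hGd]
      simp
    have hvan := fqbar_vanish_of_normal ρ G p hgp lam hlam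
    have h0 := hD0 p hp
    have hDF₀ : Dbar F₀ p = 0 := Prod.ext h0.1 h0.2
    have hfq10 : fq1bar ρ F₀ p = 0 := by
      rw [fq1bar_eq, h0.1, hDF₀]
      simp [qinner]
    have hfq20 : fq2bar ρ F₀ p = 0 := by
      rw [fq2bar_eq, h0.2, hDF₀]
      simp [qinner]
    constructor
    · rw [fq1bar_add ρ F F₀ G p hadd, hfq10, hvan.1, add_zero]
    · rw [fq2bar_add ρ F F₀ G p hadd, hfq20, hvan.2, add_zero]
  · intro h
    obtain ⟨F, U, hU, hSU, hFCD, hFeq⟩ := hf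
    have hgradCD : ContDiffOn ℝ (⊤:ℕ∞) (grad ρ) Ω := contDiffOn_grad hΩ hρ
    set V : Set E := Ω ∩ (grad ρ) ⁻¹' ({0}ᶜ) with hV
    have hVopen : IsOpen V :=
      hgradCD.continuousOn.isOpen_inter_preimage hΩ isOpen_compl_singleton
    have hVΩ : V ⊆ Ω := inter_subset_left
    have hVne : ∀ x ∈ V, grad ρ x ≠ 0 := fun x hx => hx.2
    set U' : Set E := U ∩ V with hU'def
    have hU' : IsOpen U' := hU.inter hVopen
    have hU'U : U' ⊆ U := inter_subset_left
    have hU'V : U' ⊆ V := inter_subset_right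
    have hSU' : S ⊆ U' := by
      intro p hp
      refine ⟨hSU hp, ?_, ?_⟩
      · rw [hS] at hp; exact hp.1
      · exact hgrad p hp
    set c : E → ℝ := fun x => (edot (grad ρ x) (grad ρ x))⁻¹ with hc
    set g₀ : E → ℍ := fun x => c x • qinner (grad ρ x) (Dbar F x) with hg₀
    have hcCD : ContDiffOn ℝ (⊤:ℕ∞) c U' := by
      apply ContDiffOn.inv
      · exact contDiffOn_edot ((hgradCD.mono hVΩ).mono hU'V) ((hgradCD.mono hVΩ).mono hU'V)
      · intro x hx
        exact (edot_self_pos (hVne x (hU'V hx))).ne'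
    have hg₀CD : ContDiffOn ℝ (⊤:ℕ∞) g₀ U' :=
      hcCD.smul (contDiffOn_qinner ((hgradCD.mono hVΩ).mono hU'V)
        ((contDiffOn_Dbar hU hFCD).mono hU'U))
    set F' : E → ℍ := fun x => F x - ρ x • g₀ x with hF'
    have hF'CD : ContDiffOn ℝ (⊤:ℕ∞) F' U' :=
      (hFCD.mono hU'U).sub (((hρ.mono hVΩ).mono hU'V).smul hg₀CD)
    have hF'eq : EqOn F' f S := by
      intro q hq
      have hρq : ρ q = 0 := by rw [hS] at hq; exact hq.2
      simp only [hF', hρq, zero_smul, sub_zero]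
      exact hFeq hq
    refine ⟨F', ⟨U', hU', hSU', hF'CD, hF'eq⟩, ?_⟩
    intro p hp
    have hpU' : p ∈ U' := hSU' hp
    have hρp : ρ p = 0 := by rw [hS] at hp; exact hp.2
    have hgp : grad ρ p ≠ 0 := hgrad p hp
    have hρd : DifferentiableAt ℝ ρ p :=
      (hρ.contDiffAt (hΩ.mem_nhds (by rw [hS] at hp; exact hp.1))).differentiableAt
        (by simp)
    have hg₀d : DifferentiableAt ℝ g₀ p :=
      (hg₀CD.contDiffAt (hU'.mem_nhds hpU')).differentiableAt (by simp)
    have hFd : DifferentiableAt ℝ F p :=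
      (hFCD.contDiffAt (hU.mem_nhds (hU'U hpU'))).differentiableAt (by simp)
    have hsm : HasFDerivAt (fun x => ρ x • g₀ x) ((fderiv ℝ ρ p).smulRight (g₀ p)) p := by
      have h2 : HasFDerivAt (fun x => ρ x • g₀ x)
          (ρ p • fderiv ℝ g₀ p + (fderiv ℝ ρ p).smulRight (g₀ p)) p :=
        hρd.hasFDerivAt.smul hg₀d.hasFDerivAt
      exact h2.congr_fderiv (by ext v <;> simp [hρp])
    have hder : ∀ v, fderiv ℝ F' p v = fderiv ℝ F p v - fderiv ℝ ρ p v • g₀ p := by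
      intro v
      have hdiff : HasFDerivAt F' (fderiv ℝ F p - (fderiv ℝ ρ p).smulRight (g₀ p)) p :=
        hFd.hasFDerivAt.sub hsm
      rw [hdiff.fderiv]
      simp
    have key := h F ⟨U, hU, hSU, hFCD, hFeq⟩ p hp
    have hnq := nu_mul_qinner ρ p hgp (Dbar F p)
    have h1 : dbar1 F p = (grad ρ p).1 * g₀ p := by
      have h2 := sub_eq_zero.mp (fq1bar_eq ρ F p ▸ key.1)
      rw [h2, hnq.1]
    have h2 : dbar2 F p = (grad ρ p).2 * g₀ p := by
      have h3 := sub_eq_zero.mp (fq2bar_eq ρ F p ▸ key.2)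
      rw [h3, hnq.2]
    constructor
    · have hg1 : (grad ρ p).1 = ∑ α : Fin 4, fderiv ℝ ρ p (e1 α) • e α := rfl
      rw [show dbar1 F' p = dbar1 F p - (grad ρ p).1 * g₀ p by
        rw [hg1]
        simp [dbar1, hder, mul_sub, Finset.sum_sub_distrib, Finset.sum_mul, smul_mul_assoc,
          mul_smul_comm]]
      rw [h1, sub_self]
    · have hg2 : (grad ρ p).2 = ∑ α : Fin 4, fderiv ℝ ρ p (e2 α) • e α := rfl
      rw [show dbar2 F' p = dbar2 F p - (grad ρ p).2 * g₀ p by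
        rw [hg2]
        simp [dbar2, hder, mul_sub, Finset.sum_sub_distrib, Finset.sum_mul, smul_mul_assoc,
          mul_smul_comm]]
      rw [h2, sub_self]
end
end

section
/- Let S = {(q₁,q₂) ∈ ℍ² : y₃ = 0}, with defining function ρ = y₃, and define f : S → ℍ by f = −x₁y₀·j + x₀y₀·k. Then f is a CRF function, f^⊥ = f_{(y₃)} = −x₀ + x₁·i, and f_{(y₃)} is not CRF (one has ∂G/∂q̄₁ = −2 ≠ 0 for any smooth extension G of f_{(y₃)} on S). Hence f is a CRF function which is not admissible. -/
/-!
Quaternionic analysis in two variables: the Cauchy–Riemann–Fueter operator,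
CRF functions and admissible functions on a hypersurface `S ⊂ ℍ²`.
-/

noncomputable section

open Set

/-- The quaternions. -/
local notation "ℍ" => Quaternion ℝ

/-! ### Auxiliary machinery for the counterexample -/

attribute [local simp] Quaternion.re_one Quaternion.imI_one Quaternion.imJ_one Quaternion.imK_one Quaternion.re_zero Quaternion.imI_zero Quaternion.imJ_zero Quaternion.imK_zero

def qreCLM : ℍ →L[ℝ] ℝ := ⟨QuaternionAlgebra.reₗ _ _ _, Quaternion.continuous_re⟩
def qimICLM : ℍ →L[ℝ] ℝ := ⟨QuaternionAlgebra.imIₗ _ _ _, Quaternion.continuous_imI⟩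
def qimKCLM : ℍ →L[ℝ] ℝ := ⟨QuaternionAlgebra.imKₗ _ _ _, Quaternion.continuous_imK⟩

def cx0 : E →L[ℝ] ℝ := qreCLM.comp (ContinuousLinearMap.fst ℝ ℍ ℍ)
def cx1 : E →L[ℝ] ℝ := qimICLM.comp (ContinuousLinearMap.fst ℝ ℍ ℍ)
def cy0 : E →L[ℝ] ℝ := qreCLM.comp (ContinuousLinearMap.snd ℝ ℍ ℍ)
def cy3 : E →L[ℝ] ℝ := qimKCLM.comp (ContinuousLinearMap.snd ℝ ℍ ℍ)

@[simp] lemma cx0_apply (p : E) : cx0 p = p.1.re := rfl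
@[simp] lemma cx1_apply (p : E) : cx1 p = p.1.imI := rfl
@[simp] lemma cy0_apply (p : E) : cy0 p = p.2.re := rfl
@[simp] lemma cy3_apply (p : E) : cy3 p = p.2.imK := rfl

@[simp] lemma e_zero : e 0 = 1 := rfl
@[simp] lemma two_re : ((2:ℍ)).re = 2 := rfl
@[simp] lemma two_imI : ((2:ℍ)).imI = 0 := rfl
@[simp] lemma two_imJ : ((2:ℍ)).imJ = 0 := rfl
@[simp] lemma two_imK : ((2:ℍ)).imK = 0 := rfl
@[simp] lemma e1_re : (e 1).re = 0 := rfl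
@[simp] lemma e1_imI : (e 1).imI = 1 := rfl
@[simp] lemma e1_imJ : (e 1).imJ = 0 := rfl
@[simp] lemma e1_imK : (e 1).imK = 0 := rfl
@[simp] lemma e2_re : (e 2).re = 0 := rfl
@[simp] lemma e2_imI : (e 2).imI = 0 := rfl
@[simp] lemma e2_imJ : (e 2).imJ = 1 := rfl
@[simp] lemma e2_imK : (e 2).imK = 0 := rfl
@[simp] lemma e3_re : (e 3).re = 0 := rfl
@[simp] lemma e3_imI : (e 3).imI = 0 := rfl
@[simp] lemma e3_imJ : (e 3).imJ = 0 := rfl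
@[simp] lemma e3_imK : (e 3).imK = 1 := rfl

lemma hasFDerivAt_mul_smul (a b : E →L[ℝ] ℝ) (c : ℍ) (p : E) :
    HasFDerivAt (fun q => (a q * b q) • c)
      ((a p • (b : E →L[ℝ] ℝ) + b p • (a : E →L[ℝ] ℝ)).smulRight c) p :=
  ((a.hasFDerivAt).mul (b.hasFDerivAt)).smul_const c

lemma contDiff_mul_smul (a b : E →L[ℝ] ℝ) (c : ℍ) :
    ContDiff ℝ (⊤:ℕ∞) (fun q => (a q * b q) • c) :=
  ((a.contDiff.mul b.contDiff).smul contDiff_const)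

lemma tangential_fderiv {F G : E → ℍ} {p v : E}
    (hF : DifferentiableAt ℝ F p) (hG : DifferentiableAt ℝ G p)
    (hEq : ∀ q : E, q.2.imK = 0 → F q = G q)
    (hp : p.2.imK = 0) (hv : v.2.imK = 0) :
    fderiv ℝ F p v = fderiv ℝ G p v := by
  have hline : HasDerivAt (fun t : ℝ => p + t • v) v 0 := by
    simpa using ((hasDerivAt_id (0:ℝ)).smul_const v).const_add p
  have hmem : ∀ t : ℝ, ((p + t • v).2).imK = 0 := by
    intro t
    simp [Prod.snd_add, hp, hv]
  have h1 : HasDerivAt (fun t : ℝ => F (p + t • v)) (fderiv ℝ F p v) 0 := by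
    have := hF.hasFDerivAt.comp_hasDerivAt_of_eq 0 hline (by simp)
    exact this
  have h2 : HasDerivAt (fun t : ℝ => G (p + t • v)) (fderiv ℝ G p v) 0 := by
    have := hG.hasFDerivAt.comp_hasDerivAt_of_eq 0 hline (by simp)
    exact this
  have hfun : (fun t : ℝ => F (p + t • v)) = fun t : ℝ => G (p + t • v) :=
    funext fun t => hEq _ (hmem t)
  exact h1.unique (hfun ▸ h2)

/-! ### The explicit functions of the counterexample -/

def Sset : Set E := {p : E | p.2.imK = 0}
def rhoval : E → ℝ := fun p => p.2.imK
def fval : E → ℍ := fun p => (-(p.1.imI * p.2.re)) • e 2 + (p.1.re * p.2.re) • e 3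
def gval : E → ℍ := fun p => -((p.1.re : ℍ)) + p.1.imI • e 1

lemma fval_eq : fval = fun q => (cx1 q * cy0 q) • (-(e 2)) + (cx0 q * cy0 q) • e 3 := by
  funext q
  simp [fval, neg_smul, smul_neg]

lemma hasF_fval (p : E) :
    HasFDerivAt fval
      ((cx1 p • (cy0 : E →L[ℝ] ℝ) + cy0 p • (cx1 : E →L[ℝ] ℝ)).smulRight (-(e 2))
        + (cx0 p • (cy0 : E →L[ℝ] ℝ) + cy0 p • (cx0 : E →L[ℝ] ℝ)).smulRight (e 3)) p := by
  rw [fval_eq]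
  exact (hasFDerivAt_mul_smul cx1 cy0 _ p).add (hasFDerivAt_mul_smul cx0 cy0 _ p)

lemma fderiv_fval (p v : E) :
    fderiv ℝ fval p v = (p.1.imI * v.2.re + p.2.re * v.1.imI) • (-(e 2))
      + (p.1.re * v.2.re + p.2.re * v.1.re) • e 3 := by
  rw [(hasF_fval p).fderiv]
  simp

lemma diff_fval : Differentiable ℝ fval := fun p => (hasF_fval p).differentiableAt

/-- The good extension of `fval`. -/
def FE : E → ℍ := fun q =>
  (cx1 q * cy0 q) • (-(e 2)) + (cx0 q * cy0 q) • e 3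
    + (cy3 q * cx0 q) • (-(1:ℍ)) + (cy3 q * cx1 q) • e 1

lemma hasF_FE (p : E) :
    HasFDerivAt FE
      ((cx1 p • (cy0 : E →L[ℝ] ℝ) + cy0 p • (cx1 : E →L[ℝ] ℝ)).smulRight (-(e 2))
        + (cx0 p • (cy0 : E →L[ℝ] ℝ) + cy0 p • (cx0 : E →L[ℝ] ℝ)).smulRight (e 3)
        + (cy3 p • (cx0 : E →L[ℝ] ℝ) + cx0 p • (cy3 : E →L[ℝ] ℝ)).smulRight (-(1:ℍ))
        + (cy3 p • (cx1 : E →L[ℝ] ℝ) + cx1 p • (cy3 : E →L[ℝ] ℝ)).smulRight (e 1)) p :=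
  (((hasFDerivAt_mul_smul cx1 cy0 _ p).add (hasFDerivAt_mul_smul cx0 cy0 _ p)).add
      (hasFDerivAt_mul_smul cy3 cx0 _ p)).add (hasFDerivAt_mul_smul cy3 cx1 _ p)

lemma fderiv_FE (p v : E) :
    fderiv ℝ FE p v = (p.1.imI * v.2.re + p.2.re * v.1.imI) • (-(e 2))
      + (p.1.re * v.2.re + p.2.re * v.1.re) • e 3
      + (p.2.imK * v.1.re + p.1.re * v.2.imK) • (-(1:ℍ))
      + (p.2.imK * v.1.imI + p.1.imI * v.2.imK) • e 1 := by
  rw [(hasF_FE p).fderiv]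
  simp

lemma contDiff_FE : ContDiff ℝ (⊤:ℕ∞) FE :=
  (((contDiff_mul_smul cx1 cy0 _).add (contDiff_mul_smul cx0 cy0 _)).add
      (contDiff_mul_smul cy3 cx0 _)).add (contDiff_mul_smul cy3 cx1 _)

lemma smoothExt_FE : SmoothExt Sset fval FE := by
  refine ⟨Set.univ, isOpen_univ, Set.subset_univ _, contDiff_FE.contDiffOn, ?_⟩
  intro q hq
  have hq' : q.2.imK = 0 := hq
  simp [FE, fval, hq', neg_smul, smul_neg]

/-- `gval` as a continuous linear map. -/
def LgE : E →L[ℝ] ℍ := cx0.smulRight (-(1:ℍ)) + cx1.smulRight (e 1)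

lemma gval_eq : gval = ⇑LgE := by
  funext q
  ext <;> simp [gval, LgE]

lemma smoothExt_diffAt {h F : E → ℍ} (hx : SmoothExt Sset h F) {p : E} (hp : p ∈ Sset) :
    DifferentiableAt ℝ F p := by
  obtain ⟨U, hU, hSU, hsm, -⟩ := hx
  exact (hsm.differentiableOn (by simp)).differentiableAt (hU.mem_nhds (hSU hp))

lemma ext_fderiv_eq {h F : E → ℍ} (hx : SmoothExt Sset h F) (hdiff : Differentiable ℝ h)
    {p : E} (hp : p ∈ Sset) {v : E} (hv : v.2.imK = 0) :
    fderiv ℝ F p v = fderiv ℝ h p v :=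
  tangential_fderiv (smoothExt_diffAt hx hp) (hdiff p)
    (fun q hq => hx.choose_spec.2.2.2 hq) hp hv

/-! ### Geometry of `S` -/

lemma fderiv_rhoval (p : E) : fderiv ℝ rhoval p = cy3 := by
  have : rhoval = ⇑cy3 := rfl
  rw [this, ContinuousLinearMap.fderiv]

lemma grad_rhoval (p : E) : grad rhoval p = ((0:ℍ), e 3) := by
  simp only [grad, fderiv_rhoval]
  simp [Fin.sum_univ_four, e1, e2, Prod.ext_iff]

lemma edot_nn : edot ((0:ℍ), e 3) ((0:ℍ), e 3) = 1 := by
  simp [edot, qdot, Quaternion.ext_iff]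

lemma nu_rhoval (p : E) : nu rhoval p = ((0:ℍ), e 3) := by
  simp [nu, grad_rhoval, edot_nn]

lemma star_e3 : star (e 3) = -(e 3) := by
  ext <;> simp

lemma e3_mul_e3 : e 3 * e 3 = -1 := by
  ext <;> simp

/-! ### `Dbar` of the good extension vanishes on `S` -/

lemma dbar1_FE (p : E) (hp : p ∈ Sset) : dbar1 FE p = 0 := by
  have hp' : p.2.imK = 0 := hp
  simp only [dbar1, Fin.sum_univ_four, fderiv_FE]
  ext <;> simp [e1, hp'] <;> ring

lemma dbar2_FE (p : E) : dbar2 FE p = 0 := by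
  simp only [dbar2, Fin.sum_univ_four, fderiv_FE]
  ext <;> simp [e2] <;> ring

lemma isCRF_fval : IsCRF Sset fval :=
  ⟨FE, smoothExt_FE, fun p hp => ⟨dbar1_FE p hp, dbar2_FE p⟩⟩

/-! ### `f^⊥` and `f_{(y₃)}` for an arbitrary extension -/

lemma quat_cancel (A D0 D3 : ℍ) :
    D3 - (star (0:ℍ) * A + star (e 3) * (e 0 * D0 + e 1 * 0 + e 2 * 0 + e 3 * D3)) =
      e 3 * D0 := by
  simp [star_e3, mul_add, neg_mul, ← mul_assoc, e3_mul_e3]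

lemma key2 (F : E → ℍ) (hx : SmoothExt Sset fval F) (p : E) (hp : p ∈ Sset) :
    perpOf rhoval F p = gval p ∧ fy rhoval F 3 p = gval p := by
  have hp' : p.2.imK = 0 := hp
  have hD0 : fderiv ℝ F p (e2 0) = p.1.imI • (-(e 2)) + p.1.re • e 3 := by
    rw [ext_fderiv_eq hx diff_fval hp (by simp [e2]), fderiv_fval]
    simp [e2]
  have hD1 : fderiv ℝ F p (e2 1) = 0 := by
    rw [ext_fderiv_eq hx diff_fval hp (by simp [e2]), fderiv_fval]
    simp [e2]
  have hD2 : fderiv ℝ F p (e2 2) = 0 := by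
    rw [ext_fderiv_eq hx diff_fval hp (by simp [e2]), fderiv_fval]
    simp [e2]
  have hperp : perpOf rhoval F p = gval p := by
    have he23 : e2 3 = (((0:ℍ), e 3) : E) := rfl
    rw [perpOf, nu_rhoval]
    show fderiv ℝ F p (((0:ℍ), e 3) : E) -
        (star (0:ℍ) * dbar1 F p + star (e 3) * dbar2 F p) = gval p
    rw [← he23, dbar2]
    rw [Fin.sum_univ_four, hD0, hD1, hD2]
    rw [quat_cancel]
    ext <;> simp [gval] <;> ring
  refine ⟨hperp, ?_⟩
  have hedot : edot (e2 3) (nu rhoval p) = 1 := by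
    rw [nu_rhoval]
    show edot (((0:ℍ), e 3) : E) (((0:ℍ), e 3) : E) = 1
    exact edot_nn
  rw [fy, hedot, nu_rhoval, one_smul, one_smul]
  have hzero : e2 3 - (((0:ℍ), e 3) : E) = 0 := by
    simp [e2, Prod.ext_iff]
  rw [hzero, (fderiv ℝ F p).map_zero, zero_add, hperp]

/-! ### Every extension of `g` has `∂G/∂q̄₁ = −2` on `S` -/

lemma diff_gval : Differentiable ℝ gval := by
  rw [gval_eq]; exact LgE.differentiable

lemma key3 (G : E → ℍ) (hx : SmoothExt Sset gval G) (p : E) (hp : p ∈ Sset) :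
    dbar1 G p = -2 := by
  have hα : ∀ α : Fin 4, fderiv ℝ G p (e1 α) = LgE (e1 α) := by
    intro α
    rw [ext_fderiv_eq hx diff_gval hp (by simp [e1]), gval_eq, ContinuousLinearMap.fderiv]
  simp only [dbar1, Fin.sum_univ_four, hα]
  ext <;> simp [LgE, e1] <;> ring

lemma zero_mem_Sset : (0 : E) ∈ Sset := by
  simp [Sset]

lemma not_isCRF_gval : ¬ IsCRF Sset gval := by
  rintro ⟨G, hext, h0⟩
  have h1 := (h0 0 zero_mem_Sset).1
  have h2 := key3 G hext 0 zero_mem_Sset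
  rw [h1] at h2
  have := congrArg QuaternionAlgebra.re h2
  norm_num at this

lemma not_admissible : ¬ Admissible rhoval Sset fval := by
  rintro ⟨-, hall⟩
  obtain ⟨G, ⟨U, hU, hSU, hsm, hEq⟩, h0⟩ := (hall FE smoothExt_FE 3).2
  refine not_isCRF_gval ⟨G, ⟨U, hU, hSU, hsm, ?_⟩, h0⟩
  intro q hq
  exact (hEq hq).trans (key2 FE smoothExt_FE q hq).2

/-- the counterexample. On `S = {y₃ = 0}` with defining
function `ρ = y₃`, the function `f = −x₁y₀j + x₀y₀k` is CRF, with
`f^⊥ = f_{(y₃)} = −x₀ + x₁i` on `S`; every smooth extension `G` of `f_{(y₃)}`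
has `∂G/∂q̄₁ = −2` on `S`, so `f_{(y₃)}` is not CRF; hence `f` is a CRF
function which is not admissible. -/
theorem crf_not_admissible_example
    (ρ : E → ℝ) (hρ : ρ = fun p => p.2.imK)
    (S : Set E) (hS : S = {p : E | p.2.imK = 0})
    (f : E → ℍ)
    (hf : f = fun p => (-(p.1.imI * p.2.re)) • e 2 + (p.1.re * p.2.re) • e 3)
    (g : E → ℍ) (hg : g = fun p => -((p.1.re : ℍ)) + p.1.imI • e 1) :
    IsCRF S f ∧
    (∀ F, SmoothExt S f F → ∀ p ∈ S, perpOf ρ F p = g p ∧ fy ρ F 3 p = g p) ∧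
    (∀ G, SmoothExt S g G → ∀ p ∈ S, dbar1 G p = -2) ∧
    ¬ IsCRF S g ∧
    ¬ Admissible ρ S f := by
  subst hρ hS hf hg
  exact ⟨isCRF_fval, key2, key3, not_isCRF_gval, not_admissible⟩
end
end
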